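/- A vector x in R^E (indexed by the edges of a graph G) lies in the metric polytope MET(G) if and only if x(e) ≥ 0 for every edge e, and for every cycle C in G and every edge e in C, x(e) ≤ Σ_{ẽ ∈ C, ẽ ≠ e} x(ẽ). -/

import Mathlib

namespace MetAux

open SimpleGraph

variable {V : Type*} [DecidableEq V] {G : SimpleGraph V} {x : Sym2 V → ℝ}

lemma msum_le {s t : Multiset (Sym2 V)} (h : s ≤ t)
    (hnn : ∀ e ∈ t, 0 ≤ x e) : (s.map x).sum ≤ (t.map x).sum := by
  obtain ⟨u, rfl⟩ := Multiset.le_iff_exists_add.mp h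
  simp only [Multiset.map_add, Multiset.sum_add, le_add_iff_nonneg_right]
  apply Multiset.sum_nonneg
  intro a ha
  obtain ⟨e, he, rfl⟩ := Multiset.mem_map.mp ha
  exact hnn e (by simp [he])

lemma wt_nonneg (hx : ∀ e ∈ G.edgeSet, 0 ≤ x e) {u v : V} (p : G.Walk u v) :
    0 ≤ (p.edges.map x).sum := by
  apply List.sum_nonneg
  intro a ha
  obtain ⟨e, he, rfl⟩ := List.mem_map.mp ha
  exact hx e (p.edges_subset_edgeSet he)

lemma d_le_wt (d : V → V → ℝ) (h0 : ∀ v, d v v = 0)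
    (htri : ∀ u v w, d u w ≤ d u v + d v w)
    (hxd : ∀ u v, G.Adj u v → x s(u,v) = d u v) :
    ∀ {u v : V} (p : G.Walk u v), d u v ≤ (p.edges.map x).sum
  | _, _, SimpleGraph.Walk.nil => by simp [h0]
  | u, w, @SimpleGraph.Walk.cons _ _ _ v' _ h p => by
      have ih := d_le_wt d h0 htri hxd p
      simp only [SimpleGraph.Walk.edges_cons, List.map_cons, List.sum_cons]
      have h1 := htri u v' w
      rw [← hxd _ _ h] at h1
      linarith

end MetAux

open MetAux SimpleGraph in
/-- x ∈ MET(G) (i.e., x is the restriction to the edges of `G` of a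
pseudometric on `V`) iff x is nonnegative on edges and satisfies every cycle
inequality: for every cycle (closed trail) `C` and edge `e ∈ C`,
`x e ≤ ∑_{ẽ ∈ C, ẽ ≠ e} x ẽ`. -/
theorem met_polytope_iff_cycle_inequalities {V : Type*} [Fintype V] [DecidableEq V]
    (G : SimpleGraph V) (x : Sym2 V → ℝ) :
    ((∀ e ∈ G.edgeSet, 0 ≤ x e) ∧
      (∀ (v : V) (p : G.Walk v v), p.IsCircuit →
        ∀ e ∈ p.edges, x e ≤ ((p.edges.erase e).map x).sum)) ↔
    (∃ d : V → V → ℝ,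
      (∀ v, d v v = 0) ∧
      (∀ u v, d u v = d v u) ∧
      (∀ u v, 0 ≤ d u v) ∧
      (∀ u v w, d u w ≤ d u v + d v w) ∧
      (∀ u v, G.Adj u v → x s(u, v) = d u v)) := by
  classical
  constructor
  · rintro ⟨hx0, hcyc⟩
    set M : ℝ := ∑ e ∈ G.edgeFinset, x e with hMdef
    set S : V → V → Set ℝ :=
      fun u v => {r | ∃ p : G.Walk u v, (p.edges.map x).sum = r} with hSdef
    have hbdd : ∀ u v, BddBelow (S u v) := by
      rintro u v
      refine ⟨0, ?_⟩
      rintro r ⟨p, rfl⟩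
      exact wt_nonneg hx0 p
    have hne : ∀ {u v : V}, G.Reachable u v → (S u v).Nonempty := by
      intro u v h
      obtain ⟨p⟩ := h
      exact ⟨_, p, rfl⟩
    have hsInf_nonneg : ∀ {u v : V}, G.Reachable u v → 0 ≤ sInf (S u v) := by
      intro u v h
      refine le_csInf (hne h) ?_
      rintro r ⟨p, rfl⟩
      exact wt_nonneg hx0 p
    have hsInf_le : ∀ {u v : V} (p : G.Walk u v),
        sInf (S u v) ≤ (p.edges.map x).sum :=
      fun p => csInf_le (hbdd _ _) ⟨p, rfl⟩
    have hM0 : 0 ≤ M := by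
      refine Finset.sum_nonneg fun e he => hx0 e ?_
      rwa [mem_edgeFinset] at he
    have hpathM : ∀ {u v : V} (p : G.Walk u v), p.edges.Nodup →
        (p.edges.map x).sum ≤ M := by
      intro u v p hnd
      rw [← List.sum_toFinset x hnd]
      refine Finset.sum_le_sum_of_subset_of_nonneg ?_ ?_
      · intro e he
        rw [List.mem_toFinset] at he
        rw [mem_edgeFinset]
        exact p.edges_subset_edgeSet he
      · intro e he _
        rw [mem_edgeFinset] at he
        exact hx0 e he
    have hsInf_M : ∀ {u v : V}, G.Reachable u v → sInf (S u v) ≤ M := by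
      intro u v h
      obtain ⟨p⟩ := h
      exact le_trans (hsInf_le p.bypass)
        (hpathM p.bypass p.bypass_isPath.isTrail.edges_nodup)
    have hSsymm : ∀ u v, S u v = S v u := by
      intro u v
      ext r
      constructor
      · rintro ⟨p, rfl⟩
        exact ⟨p.reverse, by simp [Walk.edges_reverse, List.sum_reverse]⟩
      · rintro ⟨p, rfl⟩
        exact ⟨p.reverse, by simp [Walk.edges_reverse, List.sum_reverse]⟩
    refine ⟨fun u v => if h : G.Reachable u v then sInf (S u v) else M,
      ?_, ?_, ?_, ?_, ?_⟩ <;> dsimp only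
    · intro v
      rw [dif_pos (Reachable.refl v)]
      refine le_antisymm ?_ (hsInf_nonneg (Reachable.refl v))
      have := hsInf_le (Walk.nil : G.Walk v v)
      simpa using this
    · intro u v
      by_cases h : G.Reachable u v
      · rw [dif_pos h, dif_pos h.symm, hSsymm]
      · rw [dif_neg h, dif_neg fun h' => h h'.symm]
    · intro u v
      by_cases h : G.Reachable u v
      · rw [dif_pos h]; exact hsInf_nonneg h
      · rw [dif_neg h]; exact hM0
    · intro u v w
      by_cases huv : G.Reachable u v
      · by_cases hvw : G.Reachable v w
        · have huw : G.Reachable u w := huv.trans hvw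
          rw [dif_pos huv, dif_pos hvw, dif_pos huw]
          have key : ∀ a ∈ S u v, ∀ b ∈ S v w, sInf (S u w) ≤ a + b := by
            rintro a ⟨p, rfl⟩ b ⟨q, rfl⟩
            have := hsInf_le (p.append q)
            rwa [Walk.edges_append, List.map_append, List.sum_append] at this
          have h1 : ∀ b ∈ S v w, sInf (S u w) - b ≤ sInf (S u v) := by
            intro b hb
            refine le_csInf (hne huv) fun a ha => ?_
            have := key a ha b hb
            linarith
          have h2 : sInf (S u w) - sInf (S u v) ≤ sInf (S v w) := by
            refine le_csInf (hne hvw) fun b hb => ?_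
            have := h1 b hb
            linarith
          linarith
        · have huw : ¬ G.Reachable u w := fun h => hvw (huv.symm.trans h)
          rw [dif_neg huw, dif_neg hvw]
          have : 0 ≤ (if h : G.Reachable u v then sInf (S u v) else M) := by
            rw [dif_pos huv]; exact hsInf_nonneg huv
          linarith
      · rw [dif_neg huv]
        have h1 : (if h : G.Reachable u w then sInf (S u w) else M) ≤ M := by
          by_cases h : G.Reachable u w
          · rw [dif_pos h]; exact hsInf_M h
          · rw [dif_neg h]
        have h2 : 0 ≤ (if h : G.Reachable v w then sInf (S v w) else M) := by
          by_cases h : G.Reachable v w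
          · rw [dif_pos h]; exact hsInf_nonneg h
          · rw [dif_neg h]; exact hM0
        linarith
    · intro u v h
      rw [dif_pos h.reachable]
      refine le_antisymm ?_ ?_
      · -- x s(u,v) ≤ sInf
        refine le_csInf (hne h.reachable) ?_
        rintro r ⟨p, rfl⟩
        -- pass to the bypass path
        set q := p.bypass with hq
        have hqnd : q.edges.Nodup := p.bypass_isPath.isTrail.edges_nodup
        have hqle : (q.edges.map x).sum ≤ (p.edges.map x).sum := by
          have hsub : List.Subperm q.edges p.edges :=
            List.subperm_of_subset hqnd p.edges_bypass_subset
          have hmle : (↑q.edges : Multiset (Sym2 V)) ≤ ↑p.edges :=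
            Multiset.coe_le.mpr hsub
          have := msum_le (x := x) hmle ?_
          · simpa using this
          · intro e he
            simp only [Multiset.mem_coe] at he
            exact hx0 e (p.edges_subset_edgeSet he)
        by_cases hmem : s(u, v) ∈ q.edges
        · refine le_trans ?_ hqle
          refine List.single_le_sum ?_ _ (List.mem_map_of_mem (f := x) hmem)
          intro a ha
          obtain ⟨e, he, rfl⟩ := List.mem_map.mp ha
          exact hx0 e (q.edges_subset_edgeSet he)
        · -- build a circuit
          set c : G.Walk v v := Walk.cons h.symm q with hc
          have hct : c.IsTrail := by
            rw [Walk.isTrail_def, hc, Walk.edges_cons, List.nodup_cons]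
            exact ⟨by rwa [Sym2.eq_swap], hqnd⟩
          have hcc : c.IsCircuit := ⟨hct, by simp [hc]⟩
          have hmc : s(u, v) ∈ c.edges := by
            rw [hc, Walk.edges_cons, Sym2.eq_swap]
            exact List.mem_cons_self
          have := hcyc v c hcc s(u, v) hmc
          have herase : c.edges.erase s(u, v) = q.edges := by
            rw [hc, Walk.edges_cons, Sym2.eq_swap, List.erase_cons_head]
          rw [herase] at this
          exact le_trans this hqle
      · -- sInf ≤ x s(u,v)
        have := hsInf_le (Walk.cons h Walk.nil)
        simpa using this
  · rintro ⟨d, h0, hsym, hnn, htri, hxd⟩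
    constructor
    · intro e he
      induction e using Sym2.ind with
      | _ a b =>
        rw [mem_edgeSet] at he
        rw [hxd a b he]
        exact hnn a b
    · intro v p hp e he
      induction e using Sym2.ind with
      | _ a b =>
        have hab : G.Adj a b := p.edges_subset_edgeSet he
        have hxnn : ∀ e ∈ G.edgeSet, 0 ≤ x e := by
          intro e he'
          induction e using Sym2.ind with
          | _ a b =>
            rw [mem_edgeSet] at he'
            rw [hxd a b he']
            exact hnn a b
        have hb : b ∈ p.support := p.snd_mem_support_of_mem_edges he
        set r := p.rotate b hb with hr
        have hperm : List.Perm r.edges p.edges := (p.rotate_edges b hb).perm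
        have her : s(a, b) ∈ r.edges := hperm.mem_iff.mpr he
        have hnd : r.edges.Nodup := hperm.nodup_iff.mpr hp.isTrail.edges_nodup
        have ha : a ∈ r.support := r.fst_mem_support_of_mem_edges her
        set r1 := r.takeUntil a ha with hr1
        set r2 := r.dropUntil a ha with hr2
        have hsplit : r1.edges ++ r2.edges = r.edges := by
          rw [hr1, hr2, ← Walk.edges_append, Walk.take_spec]
        -- sums over erased lists transfer along the permutation
        have hperm' : List.Perm (r.edges.erase s(a, b)) (p.edges.erase s(a, b)) :=
          hperm.erase _
        have hsum_eq : ((r.edges.erase s(a, b)).map x).sum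
            = ((p.edges.erase s(a, b)).map x).sum :=
          (hperm'.map x).sum_eq
        rw [← hsum_eq]
        have hnn' : ∀ e' ∈ (↑(r.edges.erase s(a, b)) : Multiset (Sym2 V)), 0 ≤ x e' := by
          intro e' he'
          simp only [Multiset.mem_coe] at he'
          exact hxnn e' (r.edges_subset_edgeSet (List.mem_of_mem_erase he'))
        have hmer : (↑(r.edges.erase s(a, b)) : Multiset (Sym2 V))
            = (↑r.edges : Multiset (Sym2 V)).erase s(a, b) := by
          exact (Multiset.coe_erase r.edges s(a, b)).symm
        have hadd : (↑r.edges : Multiset (Sym2 V)) = ↑r1.edges + ↑r2.edges := by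
          rw [← hsplit]; simp
        have main : ∀ (w1 : G.Walk a b), (↑w1.edges : Multiset (Sym2 V)) ≤
            (↑(r.edges.erase s(a, b)) : Multiset (Sym2 V)) →
            x s(a, b) ≤ ((r.edges.erase s(a, b)).map x).sum := by
          intro w1 hle
          have h1 : d a b ≤ (w1.edges.map x).sum := d_le_wt d h0 htri hxd w1
          have h2 : ((w1.edges.map x).sum : ℝ)
              ≤ ((r.edges.erase s(a, b)).map x).sum := by
            have := msum_le (x := x) hle hnn'
            simpa using this
          rw [hxd a b hab]
          linarith
        rcases (List.mem_append.mp (hsplit ▸ her)) with hcase | hcase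
        · -- edge in r1, use r2 : Walk a b
          have hnotin : s(a, b) ∉ r2.edges := by
            have := (List.nodup_append.mp (hsplit ▸ hnd)).2.2
            intro hmem
            exact this _ hcase _ hmem rfl
          refine main r2 ?_
          rw [hmer, hadd, Multiset.erase_add_left_pos _ (by exact_mod_cast hcase)]
          exact Multiset.le_add_left _ _
        · -- edge in r2, use r1 reversed : Walk a b
          have hnotin : s(a, b) ∉ r1.edges := by
            have := (List.nodup_append.mp (hsplit ▸ hnd)).2.2
            intro hmem
            exact this _ hmem _ hcase rfl
          refine main r1.reverse ?_
          rw [hmer, hadd, Multiset.erase_add_right_pos _ (by exact_mod_cast hcase)]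
          have : (↑r1.reverse.edges : Multiset (Sym2 V)) = ↑r1.edges := by
            rw [Walk.edges_reverse]
            exact Multiset.coe_reverse _
          rw [this]
          exact Multiset.le_add_right _ _
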